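/- arXiv:2505.06343 — 2 statements merged into one kernel-verified Lean document; each statement's English description precedes it below -/
import Mathlib

section
/- Let (Ω, ℙ) be a probability space, let γ > 0, ε > 0, δ ∈ (0,1), N ≥ 1 with N ≥ (2γ²/ε²)·log(4/δ), and let (F_1, G_1), …, (F_N, G_N) be independent, identically distributed pairs of real random variables satisfying |F_j| ≤ γ and |G_j| ≤ γ almost surely, with common means E[F_j] = a and E[G_j] = b. Assume |a| ≤ |b| and 0 < ε < |b|. Then, writing F̄ = (1/N)∑_j F_j and Ḡ = (1/N)∑_j G_j, with probability at least 1 − δ one has Ḡ ≠ 0 and |F̄/Ḡ − a/b| ≤ 2ε/(|b| − ε). -/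
open MeasureTheory ProbabilityTheory
open scoped BigOperators ENNReal

section Aux
open Real

private lemma hd_exp (c x : ℝ) : HasDerivAt (fun x => exp (c*x)) (c * exp (c*x)) x := by
  simpa [mul_comm] using (((hasDerivAt_id x).const_mul c).exp)

lemma hoeff_aux (p : ℝ) (hp0 : 0 ≤ p) (hp1 : p ≤ 1) (x : ℝ) :
    p * exp ((1-p)*x) + (1-p) * exp (-p*x) ≤ exp (x^2/8) := by
  set q : ℝ := 1 - p with hq
  have hq0 : 0 ≤ q := by simp only [hq]; linarith
  set u : ℝ → ℝ := fun x => p * exp (q*x) + q * exp (-p*x) with hu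
  have hupos : ∀ x, 0 < u x := by
    intro x
    simp only [hu]
    rcases lt_or_eq_of_le hp0 with h | h
    · nlinarith [exp_pos (q*x), exp_pos (-p*x), mul_nonneg hq0 (exp_pos (-p*x)).le]
    · have hq1 : q = 1 := by simp [hq, ← h]
      rw [← h, hq1]; simpa using exp_pos (-0*x)
  set m : ℝ → ℝ := fun x => (p*q*(exp (q*x) - exp (-p*x))) / u x with hm
  have hud : ∀ x, HasDerivAt u (p*q*exp (q*x) + q*(-p)*exp (-p*x)) x := by
    intro x
    have h1 := ((hd_exp q x).const_mul p)
    have h2 := ((hd_exp (-p) x).const_mul q)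
    refine (h1.add h2).congr_deriv (Eq.symm ?_); ring
  have hmd : ∀ x, HasDerivAt m
      ((p*q*(q*exp (q*x) + p*exp (-p*x)) * u x - (p*q*(exp (q*x) - exp (-p*x)))^2) / (u x)^2) x := by
    intro x
    have hn : HasDerivAt (fun x => p*q*(exp (q*x) - exp (-p*x)))
        (p*q*(q*exp (q*x) + p*exp (-p*x))) x := by
      refine (((hd_exp q x).sub (hd_exp (-p) x)).const_mul (p*q)).congr_deriv (Eq.symm ?_); ring
    have := hn.div (hud x) (hupos x).ne'
    refine this.congr_deriv (Eq.symm ?_)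
    rw [div_eq_div_iff (pow_ne_zero 2 (hupos x).ne') (pow_ne_zero 2 (hupos x).ne')]
    ring
  have hm'le : ∀ x, (p*q*(q*exp (q*x) + p*exp (-p*x)) * u x - (p*q*(exp (q*x) - exp (-p*x)))^2) / (u x)^2 ≤ 1/4 := by
    intro x
    rw [div_le_iff₀ (pow_pos (hupos x) 2)]
    have hA := exp_pos (q*x); have hB := exp_pos (-p*x)
    have hpq : p + q = 1 := by simp [hq]
    have hnum : p*q*(q*exp (q*x) + p*exp (-p*x)) * u x - (p*q*(exp (q*x) - exp (-p*x)))^2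
        = (p+q)^2 * (p*q*exp (q*x)*exp (-p*x)) := by
      simp only [hu]; ring
    rw [hnum, hpq]
    simp only [hu]
    have key : (1:ℝ)/4*(p*exp (q*x) + q*exp (-p*x))^2 - (p*q*exp (q*x)*exp (-p*x))
        = 1/4*(p*exp (q*x) - q*exp (-p*x))^2 := by ring
    nlinarith [sq_nonneg (p*exp (q*x) - q*exp (-p*x))]
  -- g' = x/4 - m is monotone
  set g' : ℝ → ℝ := fun x => x/4 - m x with hg'
  have hg'd : ∀ x, HasDerivAt g' (1/4 - (p*q*(q*exp (q*x) + p*exp (-p*x)) * u x - (p*q*(exp (q*x) - exp (-p*x)))^2) / (u x)^2) x := by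
    intro x
    exact ((hasDerivAt_id x).div_const 4).sub (hmd x)
  have hg'mono : Monotone g' := by
    apply monotone_of_deriv_nonneg
    · intro x; exact ((hg'd x).differentiableAt)
    · intro x
      rw [(hg'd x).deriv]
      linarith [hm'le x]
  have hg'0 : g' 0 = 0 := by simp [hg', hm]
  -- g = x^2/8 - log (u x)
  set g : ℝ → ℝ := fun x => x^2/8 - Real.log (u x) with hg
  have hgd : ∀ x, HasDerivAt g (g' x) x := by
    intro x
    have hlog : HasDerivAt (fun x => Real.log (u x))
        ((p*q*exp (q*x) + q*(-p)*exp (-p*x)) / u x) x := (hud x).log (hupos x).ne'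
    have hx2' : HasDerivAt (fun x : ℝ => x^2/8) (x/4) x := by
      have := ((hasDerivAt_id x).pow 2).div_const 8
      refine this.congr_deriv (Eq.symm ?_)
      simp only [id_eq]
      norm_num
      ring
    refine (hx2'.sub hlog).congr_deriv (Eq.symm ?_)
    simp only [hg', hm]
    rw [sub_right_inj, div_eq_div_iff (hupos x).ne' (hupos x).ne']
    ring
  have hu0 : u 0 = 1 := by simp only [hu]; norm_num [hq]
  have hg0 : g 0 = 0 := by simp [hg, hu0]
  have hgdiff : Differentiable ℝ g := fun y => (hgd y).differentiableAt
  have key : ∀ x, 0 ≤ g x := by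
    intro x
    rcases le_or_gt 0 x with hx | hx
    · have : MonotoneOn g (Set.Ici 0) := by
        apply monotoneOn_of_deriv_nonneg (convex_Ici 0)
          hgdiff.continuous.continuousOn
        · intro y hy; exact (hgd y).differentiableAt.differentiableWithinAt
        · intro y hy
          rw [(hgd y).deriv]
          have : (0:ℝ) ≤ y := le_of_lt (by simpa using hy)
          calc (0:ℝ) = g' 0 := hg'0.symm
            _ ≤ g' y := hg'mono this
      have := this (Set.self_mem_Ici) (Set.mem_Ici.2 hx) hx
      linarith [hg0]
    · have : AntitoneOn g (Set.Iic 0) := by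
        apply antitoneOn_of_deriv_nonpos (convex_Iic 0)
          hgdiff.continuous.continuousOn
        · intro y hy; exact (hgd y).differentiableAt.differentiableWithinAt
        · intro y hy
          rw [(hgd y).deriv]
          have hy0 : y ≤ (0:ℝ) := le_of_lt (by simpa using hy)
          calc g' y ≤ g' 0 := hg'mono hy0
            _ = 0 := hg'0
      have := this (Set.mem_Iic.2 hx.le) (Set.self_mem_Iic) hx.le
      linarith [hg0]
  have := key x
  simp only [hg] at this
  have hlog : Real.log (u x) ≤ x^2/8 := by linarith
  have := (Real.log_le_iff_le_exp (hupos x)).1 hlog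
  simpa [hu, hq] using this

open MeasureTheory in
lemma hoeff_mgf {Ω : Type*} [MeasurableSpace Ω] (P : Measure Ω) [IsProbabilityMeasure P]
    (X : Ω → ℝ) (hXm : Measurable X) (γ : ℝ) (hγ : 0 < γ)
    (hbd : ∀ᵐ ω ∂P, |X ω| ≤ γ) (μ : ℝ) (hμ : ∫ ω, X ω ∂P = μ) (t : ℝ) :
    ∫ ω, Real.exp (t * X ω) ∂P ≤ Real.exp (t*μ + t^2*γ^2/2) := by
  have hXint : Integrable X P := by
    refine ⟨hXm.aestronglyMeasurable, ?_⟩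
    apply MeasureTheory.HasFiniteIntegral.of_bounded (C := γ)
    filter_upwards [hbd] with ω h using by simpa using h
  have hμbd : |μ| ≤ γ := by
    rw [← hμ]
    calc |∫ ω, X ω ∂P| ≤ ∫ ω, |X ω| ∂P := by simpa using norm_integral_le_integral_norm (μ := P) X
      _ ≤ ∫ (_ : Ω), γ ∂P := by
          apply integral_mono_ae hXint.abs (integrable_const γ)
          exact hbd
      _ = γ := by simp
  set c1 : ℝ := (exp (t*γ) + exp (-(t*γ)))/2 with hc1
  set c2 : ℝ := (exp (t*γ) - exp (-(t*γ)))/(2*γ) with hc2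
  have hptwise : ∀ᵐ ω ∂P, Real.exp (t * X ω) ≤ c1 + c2 * X ω := by
    filter_upwards [hbd] with ω h
    set l : ℝ := (γ + X ω)/(2*γ) with hl
    have habs := abs_le.1 h
    have hl0 : 0 ≤ l := by apply div_nonneg; linarith; linarith
    have hl1 : 0 ≤ 1 - l := by
      rw [hl, sub_nonneg, div_le_one (by linarith)]; linarith
    have hconv := convexOn_exp.2 (Set.mem_univ (t*γ)) (Set.mem_univ (-(t*γ)))
      hl0 hl1 (by ring)
    simp only [smul_eq_mul] at hconv
    have harg : l * (t*γ) + (1-l) * (-(t*γ)) = t * X ω := by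
      rw [hl]; field_simp; ring
    rw [harg] at hconv
    calc Real.exp (t * X ω) ≤ l * exp (t*γ) + (1-l) * exp (-(t*γ)) := hconv
      _ = c1 + c2 * X ω := by rw [hl, hc1, hc2]; field_simp; ring
  have hint1 : Integrable (fun ω => Real.exp (t * X ω)) P := by
    refine ⟨(Real.measurable_exp.comp (hXm.const_mul t)).aestronglyMeasurable, ?_⟩
    apply MeasureTheory.HasFiniteIntegral.of_bounded (C := Real.exp (|t| * γ))
    filter_upwards [hbd] with ω h
    simp only [Real.norm_eq_abs, abs_exp]
    apply Real.exp_le_exp.2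
    calc t * X ω ≤ |t * X ω| := le_abs_self _
      _ = |t| * |X ω| := abs_mul _ _
      _ ≤ |t| * γ := by apply mul_le_mul_of_nonneg_left h (abs_nonneg t)
  have hint2 : Integrable (fun ω => c1 + c2 * X ω) P :=
    (integrable_const c1).add (hXint.const_mul c2)
  have hstep : ∫ ω, Real.exp (t * X ω) ∂P ≤ c1 + c2 * μ := by
    calc ∫ ω, Real.exp (t * X ω) ∂P ≤ ∫ ω, c1 + c2 * X ω ∂P :=
          integral_mono_ae hint1 hint2 hptwise
      _ = c1 + c2 * μ := by
          rw [integral_add (integrable_const c1) (hXint.const_mul c2),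
            integral_const_mul, hμ]; simp
  set p : ℝ := (γ + μ)/(2*γ) with hp
  have hp0 : 0 ≤ p := by apply div_nonneg; linarith [abs_le.1 hμbd]; linarith
  have hp1 : p ≤ 1 := by
    rw [hp, div_le_one (by linarith)]; linarith [abs_le.1 hμbd]
  have haux := hoeff_aux p hp0 hp1 (2*t*γ)
  have h1 : (1-p) * (2*t*γ) = t*γ - t*μ := by rw [hp]; field_simp; ring
  have h2 : -p * (2*t*γ) = -(t*γ) - t*μ := by rw [hp]; field_simp; ring
  have heq : c1 + c2 * μ = Real.exp (t*μ) * (p * exp ((1-p)*(2*t*γ)) + (1-p) * exp (-p*(2*t*γ))) := by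
    rw [h1, h2, hc1, hc2, hp, Real.exp_sub, Real.exp_sub]
    field_simp
    ring
  calc ∫ ω, Real.exp (t * X ω) ∂P ≤ c1 + c2 * μ := hstep
    _ ≤ Real.exp (t*μ) * Real.exp ((2*t*γ)^2/8) := by
        rw [heq]
        exact mul_le_mul_of_nonneg_left haux (Real.exp_pos _).le
    _ = Real.exp (t*μ + t^2*γ^2/2) := by
        rw [← Real.exp_add]; ring_nf

open MeasureTheory ProbabilityTheory in
lemma integrable_exp_bd {Ω : Type*} [MeasurableSpace Ω] (P : Measure Ω) [IsProbabilityMeasure P]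
    (X : Ω → ℝ) (hXm : Measurable X) (γ : ℝ) (hbd : ∀ᵐ ω ∂P, |X ω| ≤ γ) (t : ℝ) :
    Integrable (fun ω => Real.exp (t * X ω)) P := by
  refine ⟨(Real.measurable_exp.comp (hXm.const_mul t)).aestronglyMeasurable, ?_⟩
  apply MeasureTheory.HasFiniteIntegral.of_bounded (C := Real.exp (|t| * γ))
  filter_upwards [hbd] with ω h
  simp only [Real.norm_eq_abs, abs_exp]
  apply Real.exp_le_exp.2
  calc t * X ω ≤ |t * X ω| := le_abs_self _
    _ = |t| * |X ω| := abs_mul _ _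
    _ ≤ |t| * γ := mul_le_mul_of_nonneg_left h (abs_nonneg t)

open MeasureTheory ProbabilityTheory in
lemma hoeff_tail {Ω : Type*} [MeasurableSpace Ω] (P : Measure Ω) [IsProbabilityMeasure P]
    {N : ℕ} (X : Fin N → Ω → ℝ) (hXm : ∀ j, Measurable (X j))
    (hindep : iIndepFun X P)
    (γ : ℝ) (hγ : 0 < γ) (hbd : ∀ j, ∀ᵐ ω ∂P, |X j ω| ≤ γ)
    (μ : ℝ) (hμ : ∀ j, ∫ ω, X j ω ∂P = μ) (ε : ℝ) (hε : 0 < ε) :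
    (P {ω | (N:ℝ)*(μ + ε) ≤ ∑ j, X j ω}).toReal ≤ Real.exp (-((N:ℝ)*ε^2/(2*γ^2))) := by
  set t : ℝ := ε/γ^2 with ht
  have ht0 : 0 ≤ t := by positivity
  have hint : ∀ j : Fin N, Integrable (fun ω => Real.exp (t * X j ω)) P :=
    fun j => integrable_exp_bd P (X j) (hXm j) γ (hbd j) t
  have hintsum : Integrable (fun ω => Real.exp (t * (∑ j, X j) ω)) P :=
    hindep.integrable_exp_mul_sum hXm (fun i _ => hint i)
  have hset : {ω | (N:ℝ)*(μ + ε) ≤ ∑ j, X j ω} = {ω | (N:ℝ)*(μ + ε) ≤ (∑ j, X j) ω} := by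
    ext ω; simp [Finset.sum_apply]
  rw [hset]
  calc (P {ω | (N:ℝ)*(μ + ε) ≤ (∑ j, X j) ω}).toReal
      ≤ Real.exp (-t * ((N:ℝ)*(μ + ε))) * mgf (∑ j, X j) P t :=
        measure_ge_le_exp_mul_mgf _ ht0 hintsum
    _ ≤ Real.exp (-t * ((N:ℝ)*(μ + ε))) * Real.exp ((N:ℝ)*(t*μ + t^2*γ^2/2)) := by
        apply mul_le_mul_of_nonneg_left _ (Real.exp_pos _).le
        rw [hindep.mgf_sum hXm]
        calc ∏ j, mgf (X j) P t ≤ ∏ (_ : Fin N), Real.exp (t*μ + t^2*γ^2/2) := by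
              apply Finset.prod_le_prod (fun j _ => mgf_nonneg)
              intro j _
              exact hoeff_mgf P (X j) (hXm j) γ hγ (hbd j) μ (hμ j) t
          _ = Real.exp ((N:ℝ)*(t*μ + t^2*γ^2/2)) := by
              rw [Finset.prod_const, ← Real.exp_nat_mul]
              simp
    _ = Real.exp (-((N:ℝ)*ε^2/(2*γ^2))) := by
        rw [← Real.exp_add, ht]
        congr 1
        field_simp
        ring

lemma det_ratio (a b ε f g : ℝ) (hε : 0 < ε) (hab : |a| ≤ |b|) (hεb : ε < |b|)
    (hf : |f - a| ≤ ε) (hg : |g - b| ≤ ε) :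
    g ≠ 0 ∧ |f/g - a/b| ≤ 2*ε/(|b|-ε) := by
  have habs := abs_nonneg b
  have hb0 : b ≠ 0 := by
    intro h; rw [h, abs_zero] at hεb; linarith
  have hgabs : |b| - ε ≤ |g| := by
    have h1 : |b| ≤ |g| + |g - b| := by
      have := abs_sub g (g - b)
      rw [show g - (g - b) = b from by ring] at this
      exact this
    linarith
  have hg0 : g ≠ 0 := by
    intro h; rw [h, abs_zero] at hgabs; linarith
  refine ⟨hg0, ?_⟩
  rw [div_sub_div f a hg0 hb0, abs_div]
  have hnum : |f * b - g * a| ≤ 2 * ε * |b| := by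
    rw [show f * b - g * a = (f-a) * b - (g-b) * a from by ring]
    have h1 := abs_sub ((f-a) * b) ((g-b) * a)
    rw [abs_mul, abs_mul] at h1
    have h2 : |f-a| * |b| ≤ ε * |b| := mul_le_mul_of_nonneg_right hf habs
    have h3 : |g-b| * |a| ≤ ε * |b| := by
      calc |g-b| * |a| ≤ ε * |a| := mul_le_mul_of_nonneg_right hg (abs_nonneg a)
        _ ≤ ε * |b| := mul_le_mul_of_nonneg_left hab hε.le
    linarith
  have hden : (|b|-ε) * |b| ≤ |g * b| := by
    rw [abs_mul]
    exact mul_le_mul_of_nonneg_right hgabs habs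
  have hdpos : 0 < (|b|-ε) * |b| := mul_pos (by linarith) (by linarith)
  calc |f * b - g * a| / |g * b| ≤ (2 * ε * |b|) / ((|b|-ε) * |b|) :=
        div_le_div₀ (by positivity) hnum hdpos hden
    _ = 2 * ε / (|b| - ε) := mul_div_mul_right _ _ (by intro h; rw [h] at hεb; linarith)

end Aux

/-- Sampling-cost guarantee for Algorithm 1: given `N ≥ (2γ²/ε²)·log(4/δ)` i.i.d. pairs
`(F_j, G_j)` of real random variables bounded by `γ` with means `a`, `b` satisfying
`|a| ≤ |b|` and `0 < ε < |b|`, the ratio of empirical means is within `2ε/(|b| − ε)`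
of `a/b` with probability at least `1 − δ`. -/
theorem stmt2 {Ω : Type*} [MeasurableSpace Ω] (P : Measure Ω) [IsProbabilityMeasure P]
    (γ ε δ : ℝ) (hγ : 0 < γ) (hε : 0 < ε) (hδ0 : 0 < δ) (hδ1 : δ < 1)
    (N : ℕ) (hN1 : 1 ≤ N)
    (hN : 2 * γ ^ 2 / ε ^ 2 * Real.log (4 / δ) ≤ (N : ℝ))
    (F G : Fin N → Ω → ℝ)
    (hmeas : ∀ j, Measurable fun ω => (F j ω, G j ω))
    (hindep : iIndepFun (fun j ω => (F j ω, G j ω)) P)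
    (hident : ∀ j k, IdentDistrib (fun ω => (F j ω, G j ω)) (fun ω => (F k ω, G k ω)) P P)
    (hFbd : ∀ j, ∀ᵐ ω ∂P, |F j ω| ≤ γ)
    (hGbd : ∀ j, ∀ᵐ ω ∂P, |G j ω| ≤ γ)
    (a b : ℝ) (ha : ∀ j, ∫ ω, F j ω ∂P = a) (hb : ∀ j, ∫ ω, G j ω ∂P = b)
    (hab : |a| ≤ |b|) (hεb : ε < |b|) :
    ENNReal.ofReal (1 - δ) ≤
      P {ω | ((1 / N : ℝ) * ∑ j, G j ω) ≠ 0 ∧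
          |((1 / N : ℝ) * ∑ j, F j ω) / ((1 / N : ℝ) * ∑ j, G j ω) - a / b| ≤
            2 * ε / (|b| - ε)} := by
  classical
  have hNpos : (0:ℝ) < N := by exact_mod_cast hN1
  have hFm : ∀ j, Measurable (F j) := fun j => measurable_fst.comp (hmeas j)
  have hGm : ∀ j, Measurable (G j) := fun j => measurable_snd.comp (hmeas j)
  have hFindep : iIndepFun F P :=
    hindep.comp (fun _ => Prod.fst) (fun _ => measurable_fst)
  have hGindep : iIndepFun G P :=
    hindep.comp (fun _ => Prod.snd) (fun _ => measurable_snd)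
  have hFnm : ∀ j, Measurable (fun ω => -F j ω) := fun j => (hFm j).neg
  have hGnm : ∀ j, Measurable (fun ω => -G j ω) := fun j => (hGm j).neg
  have hFnindep : iIndepFun (fun j ω => -F j ω) P :=
    hFindep.comp (fun _ => Neg.neg) (fun _ => measurable_neg)
  have hGnindep : iIndepFun (fun j ω => -G j ω) P :=
    hGindep.comp (fun _ => Neg.neg) (fun _ => measurable_neg)
  have hFnbd : ∀ j, ∀ᵐ ω ∂P, |(fun ω => -F j ω) ω| ≤ γ := by
    intro j; filter_upwards [hFbd j] with ω h using by simpa using h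
  have hGnbd : ∀ j, ∀ᵐ ω ∂P, |(fun ω => -G j ω) ω| ≤ γ := by
    intro j; filter_upwards [hGbd j] with ω h using by simpa using h
  have hFnmean : ∀ j, ∫ ω, -F j ω ∂P = -a := by
    intro j; rw [integral_neg, ha j]
  have hGnmean : ∀ j, ∫ ω, -G j ω ∂P = -b := by
    intro j; rw [integral_neg, hb j]
  -- The tail bound value
  set η : ℝ := Real.exp (-((N:ℝ)*ε^2/(2*γ^2))) with hη_def
  have hηδ : η ≤ δ/4 := by
    have h4δ : (1:ℝ) < 4/δ := by
      rw [lt_div_iff₀ hδ0]; linarith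
    have hL : 0 < Real.log (4/δ) := Real.log_pos h4δ
    have hlog : Real.log (4/δ) ≤ (N:ℝ)*ε^2/(2*γ^2) := by
      have hpos : (0:ℝ) < ε^2/(2*γ^2) := by positivity
      have h2 : (2*γ^2/ε^2) * Real.log (4/δ) * (ε^2/(2*γ^2)) = Real.log (4/δ) := by
        field_simp
      calc Real.log (4/δ) = (2*γ^2/ε^2) * Real.log (4/δ) * (ε^2/(2*γ^2)) := h2.symm
        _ ≤ (N:ℝ) * (ε^2/(2*γ^2)) := mul_le_mul_of_nonneg_right hN hpos.le
        _ = (N:ℝ)*ε^2/(2*γ^2) := by ring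
    calc η ≤ Real.exp (-(Real.log (4/δ))) := Real.exp_le_exp.2 (by linarith)
      _ = δ/4 := by
          rw [Real.exp_neg, Real.exp_log (by positivity), inv_div]
  -- the four bad events
  have hδ4 : (0:ℝ) ≤ δ/4 := by linarith
  have conv : ∀ (s : Set Ω), (P s).toReal ≤ η → P s ≤ ENNReal.ofReal (δ/4) := by
    intro s h
    exact (ENNReal.le_ofReal_iff_toReal_le (measure_ne_top P s) hδ4).2 (le_trans h hηδ)
  have hB1 := conv _ (hoeff_tail P F hFm hFindep γ hγ hFbd a ha ε hε)
  have hB2 := conv _ (hoeff_tail P (fun j ω => -F j ω) hFnm hFnindep γ hγ hFnbd (-a) hFnmean ε hε)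
  have hB3 := conv _ (hoeff_tail P G hGm hGindep γ hγ hGbd b hb ε hε)
  have hB4 := conv _ (hoeff_tail P (fun j ω => -G j ω) hGnm hGnindep γ hγ hGnbd (-b) hGnmean ε hε)
  -- good event
  set S : Set Ω := {ω | |∑ j, F j ω - (N:ℝ)*a| ≤ (N:ℝ)*ε ∧ |∑ j, G j ω - (N:ℝ)*b| ≤ (N:ℝ)*ε}
    with hS_def
  have hsumF : Measurable fun ω => ∑ j, F j ω := Finset.measurable_sum _ (fun j _ => hFm j)
  have hsumG : Measurable fun ω => ∑ j, G j ω := Finset.measurable_sum _ (fun j _ => hGm j)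
  have hSmeas : MeasurableSet S := by
    apply MeasurableSet.inter
    · exact measurableSet_le ((hsumF.sub_const _).abs) measurable_const
    · exact measurableSet_le ((hsumG.sub_const _).abs) measurable_const
  have hsub : Sᶜ ⊆ ({ω | (N:ℝ)*(a + ε) ≤ ∑ j, F j ω} ∪ {ω | (N:ℝ)*(-a + ε) ≤ ∑ j, -F j ω})
      ∪ ({ω | (N:ℝ)*(b + ε) ≤ ∑ j, G j ω} ∪ {ω | (N:ℝ)*(-b + ε) ≤ ∑ j, -G j ω}) := by
    intro ω hω
    simp only [hS_def, Set.mem_compl_iff, Set.mem_setOf_eq, not_and_or, not_le] at hω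
    rcases hω with hω | hω
    · left
      rcases lt_abs.1 hω with h | h
      · left
        simp only [Set.mem_setOf_eq]
        nlinarith
      · right
        simp only [Set.mem_setOf_eq, Finset.sum_neg_distrib]
        nlinarith
    · right
      rcases lt_abs.1 hω with h | h
      · left
        simp only [Set.mem_setOf_eq]
        nlinarith
      · right
        simp only [Set.mem_setOf_eq, Finset.sum_neg_distrib]
        nlinarith
  have hScompl : P Sᶜ ≤ ENNReal.ofReal δ := by
    calc P Sᶜ ≤ P (({ω | (N:ℝ)*(a + ε) ≤ ∑ j, F j ω} ∪ {ω | (N:ℝ)*(-a + ε) ≤ ∑ j, -F j ω})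
        ∪ ({ω | (N:ℝ)*(b + ε) ≤ ∑ j, G j ω} ∪ {ω | (N:ℝ)*(-b + ε) ≤ ∑ j, -G j ω})) :=
          measure_mono hsub
      _ ≤ P ({ω | (N:ℝ)*(a + ε) ≤ ∑ j, F j ω} ∪ {ω | (N:ℝ)*(-a + ε) ≤ ∑ j, -F j ω})
          + P ({ω | (N:ℝ)*(b + ε) ≤ ∑ j, G j ω} ∪ {ω | (N:ℝ)*(-b + ε) ≤ ∑ j, -G j ω}) :=
          measure_union_le _ _
      _ ≤ (P {ω | (N:ℝ)*(a + ε) ≤ ∑ j, F j ω} + P {ω | (N:ℝ)*(-a + ε) ≤ ∑ j, -F j ω})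
          + (P {ω | (N:ℝ)*(b + ε) ≤ ∑ j, G j ω} + P {ω | (N:ℝ)*(-b + ε) ≤ ∑ j, -G j ω}) :=
          add_le_add (measure_union_le _ _) (measure_union_le _ _)
      _ ≤ (ENNReal.ofReal (δ/4) + ENNReal.ofReal (δ/4))
          + (ENNReal.ofReal (δ/4) + ENNReal.ofReal (δ/4)) :=
          add_le_add (add_le_add hB1 hB2) (add_le_add hB3 hB4)
      _ = ENNReal.ofReal (δ/4 + δ/4 + (δ/4 + δ/4)) := by
          rw [ENNReal.ofReal_add (by linarith) (by linarith),
            ENNReal.ofReal_add hδ4 hδ4]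
      _ = ENNReal.ofReal δ := by rw [show δ/4 + δ/4 + (δ/4 + δ/4) = δ from by ring]
  have hPS : ENNReal.ofReal (1-δ) ≤ P S := by
    have h1 : P S = 1 - P Sᶜ := by
      rw [measure_compl hSmeas (measure_ne_top P S), measure_univ]
      exact (ENNReal.sub_sub_cancel ENNReal.one_ne_top prob_le_one).symm
    rw [h1]
    calc ENNReal.ofReal (1-δ) = 1 - ENNReal.ofReal δ := by
          rw [ENNReal.ofReal_sub 1 hδ0.le, ENNReal.ofReal_one]
      _ ≤ 1 - P Sᶜ := tsub_le_tsub_left hScompl 1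
  refine le_trans hPS (measure_mono ?_)
  rintro ω ⟨h1, h2⟩
  have hNne : (N:ℝ) ≠ 0 := hNpos.ne'
  have hf : |(1/N : ℝ) * ∑ j, F j ω - a| ≤ ε := by
    rw [show (1/N : ℝ) * ∑ j, F j ω - a = (1/N) * (∑ j, F j ω - (N:ℝ)*a) by
      field_simp]
    rw [abs_mul, abs_of_pos (by positivity : (0:ℝ) < 1/(N:ℝ))]
    calc (1/(N:ℝ)) * |∑ j, F j ω - (N:ℝ)*a| ≤ (1/(N:ℝ)) * ((N:ℝ)*ε) :=
          mul_le_mul_of_nonneg_left h1 (by positivity)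
      _ = ε := by field_simp
  have hg : |(1/N : ℝ) * ∑ j, G j ω - b| ≤ ε := by
    rw [show (1/N : ℝ) * ∑ j, G j ω - b = (1/N) * (∑ j, G j ω - (N:ℝ)*b) by
      field_simp]
    rw [abs_mul, abs_of_pos (by positivity : (0:ℝ) < 1/(N:ℝ))]
    calc (1/(N:ℝ)) * |∑ j, G j ω - (N:ℝ)*b| ≤ (1/(N:ℝ)) * ((N:ℝ)*ε) :=
          mul_le_mul_of_nonneg_left h2 (by positivity)
      _ = ε := by field_simp
  exact det_ratio a b ε _ _ hε hab hεb hf hg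
end

section
/- Let (Ω, ℙ) be a probability space, let γ > 0, R ≥ 1 an integer, ε > 0, δ ∈ (0,1), N ≥ 1 with N ≥ (2γ^{2R}/ε²)·log(4/δ), and let (F_1, G_1), …, (F_N, G_N) be independent, identically distributed pairs of real random variables satisfying |F_j| ≤ γ^R and |G_j| ≤ γ^R almost surely, with common means E[F_j] = a and E[G_j] = b. Assume |a| ≤ |b| and 0 < ε < |b|. Then, writing F̄ = (1/N)∑_j F_j and Ḡ = (1/N)∑_j G_j, with probability at least 1 − δ one has Ḡ ≠ 0 and |F̄/Ḡ − a/b| ≤ 2ε/(|b| − ε). -/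
open MeasureTheory ProbabilityTheory
open scoped BigOperators ENNReal
open Real

/-- positivity of `cosh s + α sinh s` for `|α| ≤ 1`. -/
lemma hoeff_g_pos {α : ℝ} (hα : |α| ≤ 1) (s : ℝ) :
    0 < Real.cosh s + α * Real.sinh s := by
  have h1 : |Real.sinh s| < Real.cosh s := by
    nlinarith [Real.cosh_sq s, Real.cosh_pos s, sq_abs (Real.sinh s),
      abs_nonneg (Real.sinh s)]
  have h2 : |α * Real.sinh s| ≤ |Real.sinh s| := by
    rw [abs_mul]
    calc |α| * |Real.sinh s| ≤ 1 * |Real.sinh s| :=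
          mul_le_mul_of_nonneg_right hα (abs_nonneg _)
      _ = |Real.sinh s| := one_mul _
  have := neg_abs_le (α * Real.sinh s)
  linarith

/-- Hoeffding-type analytic inequality, case `0 ≤ s`. -/
lemma hoeff_aux_s3 {α : ℝ} (hα : |α| ≤ 1) {s : ℝ} (hs : 0 ≤ s) :
    Real.cosh s + α * Real.sinh s ≤ Real.exp (α * s + s ^ 2 / 2) := by
  set g : ℝ → ℝ := fun x => Real.cosh x + α * Real.sinh x with hgdef
  have hg : ∀ x, 0 < g x := hoeff_g_pos hα
  set φ : ℝ → ℝ := fun x => α + x - (Real.sinh x + α * Real.cosh x) / g x with hφdef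
  set ψ : ℝ → ℝ := fun x => α * x + x ^ 2 / 2 - Real.log (g x) with hψdef
  have hgd : ∀ x, HasDerivAt g (Real.sinh x + α * Real.cosh x) x := fun x =>
    (Real.hasDerivAt_cosh x).add ((Real.hasDerivAt_sinh x).const_mul α)
  have hgd' : ∀ x, HasDerivAt (fun x => Real.sinh x + α * Real.cosh x)
      (g x) x := fun x => by
    have := (Real.hasDerivAt_sinh x).add ((Real.hasDerivAt_cosh x).const_mul α)
    exact this
  -- derivative of φ is nonnegative
  have hφd : ∀ x, HasDerivAt φ (1 - (g x * g x - (Real.sinh x + α * Real.cosh x)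
      * (Real.sinh x + α * Real.cosh x)) / g x ^ 2) x := by
    intro x
    have hdiv := HasDerivAt.div (hgd' x) (hgd x) (hg x).ne'
    have hlin : HasDerivAt (fun x : ℝ => α + x) (0 + 1) x :=
      (hasDerivAt_const x α).add (hasDerivAt_id x)
    have := hlin.sub hdiv
    exact this.congr_deriv (by ring)
  have hφd_nonneg : ∀ x, 0 ≤ 1 - (g x * g x - (Real.sinh x + α * Real.cosh x)
      * (Real.sinh x + α * Real.cosh x)) / g x ^ 2 := by
    intro x
    have h2 : (g x * g x - (Real.sinh x + α * Real.cosh x)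
        * (Real.sinh x + α * Real.cosh x)) / g x ^ 2 ≤ 1 := by
      rw [div_le_one (pow_pos (hg x) 2)]
      nlinarith [sq_nonneg (Real.sinh x + α * Real.cosh x), hg x]
    linarith
  have hφmono : Monotone φ :=
    monotone_of_deriv_nonneg (fun x => (hφd x).differentiableAt)
      (fun x => by rw [(hφd x).deriv]; exact hφd_nonneg x)
  have hφ0 : φ 0 = 0 := by
    simp [hφdef, hgdef, Real.sinh_zero, Real.cosh_zero]
  have hψd : ∀ x, HasDerivAt ψ (φ x) x := by
    intro x
    have hlog : HasDerivAt (fun x => Real.log (g x))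
        ((Real.sinh x + α * Real.cosh x) / g x) x := (hgd x).log (hg x).ne'
    have hpoly : HasDerivAt (fun x : ℝ => α * x + x ^ 2 / 2) (α + x) x := by
      have h1 : HasDerivAt (fun x : ℝ => α * x) α x := by
        simpa using (hasDerivAt_id x).const_mul α
      have h2 : HasDerivAt (fun x : ℝ => x ^ 2 / 2) x x := by
        have := (hasDerivAt_pow 2 x).div_const 2
        simpa using this
      exact h1.add h2
    exact hpoly.sub hlog
  have hψmono : MonotoneOn ψ (Set.Ici (0 : ℝ)) := by
    have hdiff : Differentiable ℝ ψ := fun x => (hψd x).differentiableAt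
    refine monotoneOn_of_deriv_nonneg (convex_Ici 0)
      hdiff.continuous.continuousOn (fun x _ => (hψd x).differentiableAt.differentiableWithinAt)
      (fun x hx => ?_)
    rw [(hψd x).deriv]
    rw [interior_Ici] at hx
    have := hφmono (le_of_lt hx)
    rw [hφ0] at this
    exact this
  have hψ0 : ψ 0 = 0 := by
    simp [hψdef, hgdef, Real.sinh_zero, Real.cosh_zero]
  have h := hψmono (Set.self_mem_Ici) (Set.mem_Ici.2 hs) hs
  rw [hψ0] at h
  have hlog : Real.log (g s) ≤ α * s + s ^ 2 / 2 := by
    simp only [hψdef] at h; linarith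
  exact (Real.log_le_iff_le_exp (hg s)).1 hlog

/-- Hoeffding-type analytic inequality, all `s`. -/
lemma hoeff {α : ℝ} (hα : |α| ≤ 1) (s : ℝ) :
    Real.cosh s + α * Real.sinh s ≤ Real.exp (α * s + s ^ 2 / 2) := by
  rcases le_or_gt 0 s with hs | hs
  · exact hoeff_aux_s3 hα hs
  · have hα' : |(-α)| ≤ 1 := by rwa [abs_neg]
    have := hoeff_aux_s3 hα' (s := -s) (by linarith)
    simpa [Real.cosh_neg, Real.sinh_neg, mul_comm] using this

/-- chord bound: `exp (t x) ≤ cosh (t c) + (x/c) sinh (t c)` for `|x| ≤ c`. -/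
lemma exp_le_chord {x c : ℝ} (t : ℝ) (hc : 0 < c) (hx : |x| ≤ c) :
    Real.exp (t * x) ≤ Real.cosh (t * c) + x / c * Real.sinh (t * c) := by
  obtain ⟨hx1, hx2⟩ := abs_le.1 hx
  have h1 : (0:ℝ) ≤ (c - x) / (2 * c) := div_nonneg (by linarith) (by linarith)
  have h2 : (0:ℝ) ≤ (x + c) / (2 * c) := div_nonneg (by linarith) (by linarith)
  have h3 : (c - x) / (2 * c) + (x + c) / (2 * c) = 1 := by field_simp; ring
  have h := convexOn_exp.2 (Set.mem_univ (-(t * c))) (Set.mem_univ (t * c)) h1 h2 h3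
  simp only [smul_eq_mul] at h
  have harg : (c - x) / (2 * c) * -(t * c) + (x + c) / (2 * c) * (t * c) = t * x := by
    field_simp; ring
  rw [harg] at h
  calc Real.exp (t * x)
      ≤ (c - x) / (2 * c) * Real.exp (-(t * c)) + (x + c) / (2 * c) * Real.exp (t * c) := h
    _ = Real.cosh (t * c) + x / c * Real.sinh (t * c) := by
        rw [Real.cosh_eq, Real.sinh_eq]
        field_simp
        ring

/-- integrability of `exp (t • X)` for a.e.-bounded measurable `X`. -/
lemma integrable_exp_of_bdd {Ω : Type*} [MeasurableSpace Ω] {P : Measure Ω}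
    [IsProbabilityMeasure P] {X : Ω → ℝ} (hX : Measurable X) {c : ℝ}
    (hbd : ∀ᵐ ω ∂P, |X ω| ≤ c) (t : ℝ) :
    Integrable (fun ω => Real.exp (t * X ω)) P := by
  refine Integrable.mono' (integrable_const (Real.exp (|t| * c)))
    ((hX.const_mul t).exp.aestronglyMeasurable) ?_
  filter_upwards [hbd] with ω h
  rw [Real.norm_eq_abs, Real.abs_exp, Real.exp_le_exp]
  calc t * X ω ≤ |t * X ω| := le_abs_self _
    _ = |t| * |X ω| := abs_mul _ _
    _ ≤ |t| * c := mul_le_mul_of_nonneg_left h (abs_nonneg t)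

lemma integrable_of_bdd {Ω : Type*} [MeasurableSpace Ω] {P : Measure Ω}
    [IsProbabilityMeasure P] {X : Ω → ℝ} (hX : Measurable X) {c : ℝ}
    (hbd : ∀ᵐ ω ∂P, |X ω| ≤ c) : Integrable X P := by
  refine Integrable.mono' (integrable_const c) hX.aestronglyMeasurable ?_
  filter_upwards [hbd] with ω h
  rwa [Real.norm_eq_abs]

/-- Hoeffding mgf bound for a bounded variable with mean `m`. -/
lemma mgf_le_hoeff {Ω : Type*} [MeasurableSpace Ω] {P : Measure Ω}
    [IsProbabilityMeasure P] {X : Ω → ℝ} (hX : Measurable X) {c : ℝ} (hc : 0 < c)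
    (hbd : ∀ᵐ ω ∂P, |X ω| ≤ c) {m : ℝ} (hm : ∫ ω, X ω ∂P = m) (t : ℝ) :
    mgf X P t ≤ Real.exp (t * m + t ^ 2 * c ^ 2 / 2) := by
  have hXint : Integrable X P := integrable_of_bdd hX hbd
  have hint1 : Integrable (fun ω => Real.exp (t * X ω)) P :=
    integrable_exp_of_bdd hX hbd t
  have hmc : |m| ≤ c := by
    rw [← hm]
    calc |∫ ω, X ω ∂P| ≤ ∫ ω, |X ω| ∂P := by
          simpa [Real.norm_eq_abs] using norm_integral_le_integral_norm (μ := P) X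
      _ ≤ ∫ _ω, c ∂P := integral_mono_ae hXint.abs (integrable_const c) hbd
      _ = c := by simp
  have key : mgf X P t ≤ Real.cosh (t * c) + m / c * Real.sinh (t * c) := by
    have hmono : ∫ ω, Real.exp (t * X ω) ∂P ≤
        ∫ ω, (Real.cosh (t * c) + X ω / c * Real.sinh (t * c)) ∂P := by
      refine integral_mono_ae hint1 ?_ ?_
      · exact (integrable_const _).add ((hXint.div_const c).mul_const _)
      · filter_upwards [hbd] with ω h
        exact exp_le_chord t hc h
    have heq : ∫ ω, (Real.cosh (t * c) + X ω / c * Real.sinh (t * c)) ∂P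
        = Real.cosh (t * c) + m / c * Real.sinh (t * c) := by
      rw [integral_add (integrable_const _) ((hXint.div_const c).mul_const _),
        integral_const, integral_mul_const, integral_div, hm]
      simp
    rw [mgf]
    rw [heq] at hmono
    exact hmono
  calc mgf X P t ≤ Real.cosh (t * c) + m / c * Real.sinh (t * c) := key
    _ ≤ Real.exp (m / c * (t * c) + (t * c) ^ 2 / 2) := by
        refine hoeff ?_ (t * c)
        rw [abs_div, abs_of_pos hc, div_le_one hc]
        exact hmc
    _ = Real.exp (t * m + t ^ 2 * c ^ 2 / 2) := by
        congr 1
        field_simp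

/-- Chernoff–Hoeffding upper tail for a sum of independent bounded variables. -/
lemma tail_le {Ω : Type*} [MeasurableSpace Ω] {P : Measure Ω}
    [IsProbabilityMeasure P] {N : ℕ} {X : Fin N → Ω → ℝ}
    (hmeas : ∀ j, Measurable (X j))
    (hindep : iIndepFun X P)
    {c ε m : ℝ} (hc : 0 < c) (hε : 0 < ε)
    (hbd : ∀ j, ∀ᵐ ω ∂P, |X j ω| ≤ c) (hmean : ∀ j, ∫ ω, X j ω ∂P = m) :
    P {ω | (N : ℝ) * (m + ε) ≤ ∑ j, X j ω} ≤
      ENNReal.ofReal (Real.exp (-(N : ℝ) * ε ^ 2 / (2 * c ^ 2))) := by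
  set t : ℝ := ε / c ^ 2 with ht
  have ht0 : 0 ≤ t := by positivity
  have hints : ∀ j ∈ Finset.univ, Integrable (fun ω => Real.exp (t * X j ω)) P :=
    fun j _ => integrable_exp_of_bdd (hmeas j) (hbd j) t
  have hS : Integrable (fun ω => Real.exp (t * (∑ j, X j) ω)) P :=
    hindep.integrable_exp_mul_sum hmeas hints
  have key := measure_ge_le_exp_mul_mgf (μ := P) (X := ∑ j, X j) ((N : ℝ) * (m + ε)) ht0 hS
  have hmgf : mgf (∑ j, X j) P t ≤ Real.exp (t * m + t ^ 2 * c ^ 2 / 2) ^ N := by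
    rw [hindep.mgf_sum hmeas]
    calc ∏ j, mgf (X j) P t ≤ ∏ _j : Fin N, Real.exp (t * m + t ^ 2 * c ^ 2 / 2) :=
          Finset.prod_le_prod (fun j _ => mgf_nonneg)
            (fun j _ => mgf_le_hoeff (hmeas j) hc (hbd j) (hmean j) t)
      _ = Real.exp (t * m + t ^ 2 * c ^ 2 / 2) ^ N := by
          rw [Finset.prod_const, Finset.card_univ, Fintype.card_fin]
  have hbound : Real.exp (-t * ((N : ℝ) * (m + ε))) *
      Real.exp (t * m + t ^ 2 * c ^ 2 / 2) ^ N
      = Real.exp (-(N : ℝ) * ε ^ 2 / (2 * c ^ 2)) := by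
    rw [← Real.exp_nat_mul, ← Real.exp_add]
    congr 1
    have hc2 : c ^ 2 ≠ 0 := by positivity
    rw [ht]
    field_simp
    ring
  have hfinal : (P {ω | (N : ℝ) * (m + ε) ≤ (∑ j, X j) ω}).toReal ≤
      Real.exp (-(N : ℝ) * ε ^ 2 / (2 * c ^ 2)) := by
    calc (P {ω | (N : ℝ) * (m + ε) ≤ (∑ j, X j) ω}).toReal
        ≤ Real.exp (-t * ((N : ℝ) * (m + ε))) * mgf (∑ j, X j) P t := key
      _ ≤ Real.exp (-t * ((N : ℝ) * (m + ε))) *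
          Real.exp (t * m + t ^ 2 * c ^ 2 / 2) ^ N := by
          exact mul_le_mul_of_nonneg_left hmgf (Real.exp_nonneg _)
      _ = Real.exp (-(N : ℝ) * ε ^ 2 / (2 * c ^ 2)) := hbound
  have hset : {ω | (N : ℝ) * (m + ε) ≤ ∑ j, X j ω}
      = {ω | (N : ℝ) * (m + ε) ≤ (∑ j, X j) ω} := by
    ext ω; simp [Finset.sum_apply]
  rw [hset]
  exact (ENNReal.le_ofReal_iff_toReal_le (measure_ne_top P _) (Real.exp_nonneg _)).2 hfinal

set_option maxHeartbeats 1000000 in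
/-- Sampling-cost guarantee for Algorithm 2 (R repeated applications, overhead `γ^R`):
given `N ≥ (2γ^{2R}/ε²)·log(4/δ)` i.i.d. pairs `(F_j, G_j)` of real random variables
bounded by `γ^R` with means `a`, `b` satisfying `|a| ≤ |b|` and `0 < ε < |b|`, the ratio
of empirical means is within `2ε/(|b| − ε)` of `a/b` with probability at least `1 − δ`. -/
theorem stmt3 {Ω : Type*} [MeasurableSpace Ω] (P : Measure Ω) [IsProbabilityMeasure P]
    (γ ε δ : ℝ) (R : ℕ) (hR : 1 ≤ R) (hγ : 0 < γ) (hε : 0 < ε) (hδ0 : 0 < δ) (hδ1 : δ < 1)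
    (N : ℕ) (hN1 : 1 ≤ N)
    (hN : 2 * γ ^ (2 * R) / ε ^ 2 * Real.log (4 / δ) ≤ (N : ℝ))
    (F G : Fin N → Ω → ℝ)
    (hmeas : ∀ j, Measurable fun ω => (F j ω, G j ω))
    (hindep : iIndepFun (fun j ω => (F j ω, G j ω)) P)
    (hident : ∀ j k, IdentDistrib (fun ω => (F j ω, G j ω)) (fun ω => (F k ω, G k ω)) P P)
    (hFbd : ∀ j, ∀ᵐ ω ∂P, |F j ω| ≤ γ ^ R)
    (hGbd : ∀ j, ∀ᵐ ω ∂P, |G j ω| ≤ γ ^ R)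
    (a b : ℝ) (ha : ∀ j, ∫ ω, F j ω ∂P = a) (hb : ∀ j, ∫ ω, G j ω ∂P = b)
    (hab : |a| ≤ |b|) (hεb : ε < |b|) :
    ENNReal.ofReal (1 - δ) ≤
      P {ω | ((1 / N : ℝ) * ∑ j, G j ω) ≠ 0 ∧
          |((1 / N : ℝ) * ∑ j, F j ω) / ((1 / N : ℝ) * ∑ j, G j ω) - a / b| ≤
            2 * ε / (|b| - ε)} := by
  set c : ℝ := γ ^ R with hcdef
  have hc : 0 < c := pow_pos hγ R
  have hc2 : γ ^ (2 * R) = c ^ 2 := by rw [hcdef, ← pow_mul, mul_comm]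
  have hNpos : (0 : ℝ) < N := by exact_mod_cast Nat.lt_of_lt_of_le Nat.zero_lt_one hN1
  have hNne : (N : ℝ) ≠ 0 := ne_of_gt hNpos
  -- measurability of the components
  have hFm : ∀ j, Measurable (F j) := fun j => measurable_fst.comp (hmeas j)
  have hGm : ∀ j, Measurable (G j) := fun j => measurable_snd.comp (hmeas j)
  have hFnm : ∀ j, Measurable (fun ω => -F j ω) := fun j => (hFm j).neg
  have hGnm : ∀ j, Measurable (fun ω => -G j ω) := fun j => (hGm j).neg
  -- independence of components
  have hFindep : iIndepFun F P :=
    hindep.comp (fun _ => (Prod.fst : ℝ × ℝ → ℝ)) (fun _ => measurable_fst)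
  have hGindep : iIndepFun G P :=
    hindep.comp (fun _ => (Prod.snd : ℝ × ℝ → ℝ)) (fun _ => measurable_snd)
  have hFnindep : iIndepFun (fun j ω => -F j ω) P :=
    hindep.comp (fun _ (p : ℝ × ℝ) => -p.1) (fun _ => measurable_fst.neg)
  have hGnindep : iIndepFun (fun j ω => -G j ω) P :=
    hindep.comp (fun _ (p : ℝ × ℝ) => -p.2) (fun _ => measurable_snd.neg)
  -- bounds and means for negated variables
  have hFnbd : ∀ j, ∀ᵐ ω ∂P, |(-F j ω)| ≤ c := fun j => by
    filter_upwards [hFbd j] with ω h; rwa [abs_neg]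
  have hGnbd : ∀ j, ∀ᵐ ω ∂P, |(-G j ω)| ≤ c := fun j => by
    filter_upwards [hGbd j] with ω h; rwa [abs_neg]
  have hna : ∀ j, ∫ ω, -F j ω ∂P = -a := fun j => by
    rw [integral_neg, ha j]
  have hnb : ∀ j, ∫ ω, -G j ω ∂P = -b := fun j => by
    rw [integral_neg, hb j]
  -- the exponential tail bound is at most δ/4
  have hexp : Real.exp (-(N : ℝ) * ε ^ 2 / (2 * c ^ 2)) ≤ δ / 4 := by
    have h4δ : (0 : ℝ) < 4 / δ := by positivity
    have hlogpos : 0 < Real.log (4 / δ) := by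
      apply Real.log_pos; rw [lt_div_iff₀ hδ0]; linarith
    have hlogle : Real.log (4 / δ) ≤ (N : ℝ) * ε ^ 2 / (2 * c ^ 2) := by
      rw [le_div_iff₀ (by positivity)]
      rw [hc2] at hN
      have h := mul_le_mul_of_nonneg_right hN (le_of_lt (by positivity : (0:ℝ) < ε ^ 2))
      have hε2 : (ε : ℝ) ^ 2 ≠ 0 := by positivity
      calc Real.log (4 / δ) * (2 * c ^ 2)
          = 2 * c ^ 2 / ε ^ 2 * Real.log (4 / δ) * ε ^ 2 := by field_simp
        _ ≤ (N : ℝ) * ε ^ 2 := h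
    calc Real.exp (-(N : ℝ) * ε ^ 2 / (2 * c ^ 2))
        ≤ Real.exp (-Real.log (4 / δ)) := by
          rw [Real.exp_le_exp]
          have : (N : ℝ) * ε ^ 2 / (2 * c ^ 2) = (N : ℝ) * ε ^ 2 / (2 * c ^ 2) := rfl
          rw [neg_mul, neg_div]
          linarith
      _ = δ / 4 := by rw [Real.exp_neg, Real.exp_log h4δ, inv_div]
  -- the four bad events
  set B1 : Set Ω := {ω | (N : ℝ) * (a + ε) ≤ ∑ j, F j ω} with hB1def
  set B2 : Set Ω := {ω | (N : ℝ) * (-a + ε) ≤ ∑ j, -F j ω} with hB2def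
  set B3 : Set Ω := {ω | (N : ℝ) * (b + ε) ≤ ∑ j, G j ω} with hB3def
  set B4 : Set Ω := {ω | (N : ℝ) * (-b + ε) ≤ ∑ j, -G j ω} with hB4def
  have hB1m : MeasurableSet B1 :=
    measurableSet_le measurable_const (Finset.measurable_sum _ (fun j _ => hFm j))
  have hB2m : MeasurableSet B2 :=
    measurableSet_le measurable_const (Finset.measurable_sum _ (fun j _ => hFnm j))
  have hB3m : MeasurableSet B3 :=
    measurableSet_le measurable_const (Finset.measurable_sum _ (fun j _ => hGm j))
  have hB4m : MeasurableSet B4 :=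
    measurableSet_le measurable_const (Finset.measurable_sum _ (fun j _ => hGnm j))
  have hT1 : P B1 ≤ ENNReal.ofReal (δ / 4) :=
    (tail_le hFm hFindep hc hε hFbd ha).trans (ENNReal.ofReal_le_ofReal hexp)
  have hT2 : P B2 ≤ ENNReal.ofReal (δ / 4) :=
    (tail_le hFnm hFnindep hc hε hFnbd hna).trans (ENNReal.ofReal_le_ofReal hexp)
  have hT3 : P B3 ≤ ENNReal.ofReal (δ / 4) :=
    (tail_le hGm hGindep hc hε hGbd hb).trans (ENNReal.ofReal_le_ofReal hexp)
  have hT4 : P B4 ≤ ENNReal.ofReal (δ / 4) :=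
    (tail_le hGnm hGnindep hc hε hGnbd hnb).trans (ENNReal.ofReal_le_ofReal hexp)
  set Bad : Set Ω := B1 ∪ (B2 ∪ (B3 ∪ B4)) with hBaddef
  have hBadm : MeasurableSet Bad := hB1m.union (hB2m.union (hB3m.union hB4m))
  have hPBad : P Bad ≤ ENNReal.ofReal δ := by
    calc P Bad ≤ P B1 + (P B2 + (P B3 + P B4)) := by
          refine (measure_union_le _ _).trans ?_
          refine add_le_add_right ((measure_union_le _ _).trans ?_) _
          exact add_le_add_right (measure_union_le _ _) _
      _ ≤ ENNReal.ofReal (δ / 4) + (ENNReal.ofReal (δ / 4) +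
          (ENNReal.ofReal (δ / 4) + ENNReal.ofReal (δ / 4))) := by
          exact add_le_add hT1 (add_le_add hT2 (add_le_add hT3 hT4))
      _ = ENNReal.ofReal δ := by
          rw [← ENNReal.ofReal_add (by positivity) (by positivity),
            ← ENNReal.ofReal_add (by positivity) (by positivity),
            ← ENNReal.ofReal_add (by positivity) (by positivity)]
          congr 1; ring
  -- the good event is contained in the target set
  have hsub : Badᶜ ⊆ {ω | ((1 / N : ℝ) * ∑ j, G j ω) ≠ 0 ∧
      |((1 / N : ℝ) * ∑ j, F j ω) / ((1 / N : ℝ) * ∑ j, G j ω) - a / b| ≤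
        2 * ε / (|b| - ε)} := by
    intro ω hω
    simp only [hBaddef, Set.compl_union, Set.mem_inter_iff, Set.mem_compl_iff,
      hB1def, hB2def, hB3def, hB4def, Set.mem_setOf_eq, not_le] at hω
    obtain ⟨h1, h2, h3, h4⟩ := hω
    have hsumnegF : ∑ j, -F j ω = -∑ j, F j ω := by rw [Finset.sum_neg_distrib]
    have hsumnegG : ∑ j, -G j ω = -∑ j, G j ω := by rw [Finset.sum_neg_distrib]
    rw [hsumnegF] at h2
    rw [hsumnegG] at h4
    set u : ℝ := (1 / N : ℝ) * ∑ j, F j ω with hudef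
    set v : ℝ := (1 / N : ℝ) * ∑ j, G j ω with hvdef
    have hu : |u - a| < ε := by
      have hS : |∑ j, F j ω - (N : ℝ) * a| < (N : ℝ) * ε :=
        abs_lt.2 ⟨by nlinarith, by nlinarith⟩
      have heq : u - a = (1 / N : ℝ) * (∑ j, F j ω - (N : ℝ) * a) := by
        rw [hudef]; field_simp
      rw [heq, abs_mul, abs_of_pos (by positivity : (0:ℝ) < 1 / N)]
      calc (1 / N : ℝ) * |∑ j, F j ω - (N : ℝ) * a| < (1 / N : ℝ) * ((N : ℝ) * ε) :=
            mul_lt_mul_of_pos_left hS (by positivity)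
        _ = ε := by field_simp
    have hv : |v - b| < ε := by
      have hS : |∑ j, G j ω - (N : ℝ) * b| < (N : ℝ) * ε :=
        abs_lt.2 ⟨by nlinarith, by nlinarith⟩
      have heq : v - b = (1 / N : ℝ) * (∑ j, G j ω - (N : ℝ) * b) := by
        rw [hvdef]; field_simp
      rw [heq, abs_mul, abs_of_pos (by positivity : (0:ℝ) < 1 / N)]
      calc (1 / N : ℝ) * |∑ j, G j ω - (N : ℝ) * b| < (1 / N : ℝ) * ((N : ℝ) * ε) :=
            mul_lt_mul_of_pos_left hS (by positivity)
        _ = ε := by field_simp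
    have habsv : |b| - ε < |v| := by
      have h := abs_sub_abs_le_abs_sub b v
      have h' : |b - v| = |v - b| := abs_sub_comm b v
      linarith
    have hvpos : 0 < |v| := by linarith
    have hvne : v ≠ 0 := abs_pos.1 hvpos
    have hbne : b ≠ 0 := by
      intro hb0; rw [hb0, abs_zero] at hεb; linarith
    have hbabs : (0:ℝ) < |b| := by linarith
    refine ⟨hvne, ?_⟩
    have hdiff : u / v - a / b = (u * b - v * a) / (v * b) := div_sub_div u a hvne hbne
    rw [hdiff, abs_div, abs_mul]
    have hnum : |u * b - v * a| ≤ 2 * ε * |b| := by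
      have e : u * b - v * a = (u - a) * b - a * (v - b) := by ring
      rw [e]
      have htri : |(u - a) * b - a * (v - b)| ≤ |(u - a) * b| + |a * (v - b)| := by
        have := abs_add_le ((u - a) * b) (-(a * (v - b)))
        rw [abs_neg] at this
        simpa [sub_eq_add_neg] using this
      calc |(u - a) * b - a * (v - b)| ≤ |(u - a) * b| + |a * (v - b)| := htri
        _ = |u - a| * |b| + |a| * |v - b| := by rw [abs_mul, abs_mul]
        _ ≤ ε * |b| + |b| * ε := add_le_add
            (mul_le_mul_of_nonneg_right hu.le (abs_nonneg b))
            (mul_le_mul hab hv.le (abs_nonneg _) (abs_nonneg b))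
        _ = 2 * ε * |b| := by ring
    have hdenpos : (0:ℝ) < (|b| - ε) * |b| := mul_pos (by linarith) hbabs
    have hden : (|b| - ε) * |b| ≤ |v| * |b| :=
      mul_le_mul_of_nonneg_right habsv.le (abs_nonneg b)
    calc |u * b - v * a| / (|v| * |b|) ≤ (2 * ε * |b|) / ((|b| - ε) * |b|) :=
          div_le_div₀ (by positivity : (0:ℝ) ≤ 2 * ε * |b|) hnum hdenpos hden
      _ = 2 * ε / (|b| - ε) := by
          rw [mul_div_mul_right _ _ (ne_of_gt hbabs)]
  -- conclude
  calc ENNReal.ofReal (1 - δ) = 1 - ENNReal.ofReal δ := by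
        rw [ENNReal.ofReal_sub _ hδ0.le, ENNReal.ofReal_one]
    _ ≤ 1 - P Bad := tsub_le_tsub_left hPBad 1
    _ = P Badᶜ := (prob_compl_eq_one_sub hBadm).symm
    _ ≤ P _ := measure_mono hsub
end
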